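/- Let p > 1 and q = p/(p-1). Define ρ_p(x) = -(1/π) x^{p-1} Im((1 - e^{iπ/q}(1/x - 1)^{1/q})^{p-1}) for x ∈ (0,1), using the principal branch of the complex power. Then ρ_p(x) > 0 for all x ∈ (0,1). -/

import Mathlib

open Complex

set_option maxHeartbeats 1000000 in
theorem stmt_14 (p : ℝ) (hp : 1 < p) (q : ℝ) (hq : q = p / (p - 1)) :
    ∀ x ∈ Set.Ioo (0 : ℝ) 1,
      0 < -(1 / Real.pi) * x ^ (p - 1) *
        ((1 - Complex.exp (Real.pi / q * I) * ((1 / x - 1) ^ (1 / q) : ℝ))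
          ^ ((p - 1 : ℝ) : ℂ)).im := by
  have hπ := Real.pi_pos
  have hp1 : (0:ℝ) < p - 1 := by linarith
  have hq1 : 1 < q := by
    rw [hq, lt_div_iff₀ hp1]; linarith
  have hsum : Real.pi / q + Real.pi / p = Real.pi := by
    rw [hq]; field_simp; ring
  have hθpos : 0 < Real.pi / q := by positivity
  have hθlt : Real.pi / q < Real.pi := by
    rw [div_lt_iff₀ (by linarith : (0:ℝ) < q)]; nlinarith
  have hφpos : 0 < Real.pi / p := by positivity
  have hφlt : Real.pi / p < Real.pi := by
    rw [div_lt_iff₀ (by linarith : (0:ℝ) < p)]; nlinarith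
  rintro x ⟨hx0, hx1⟩
  have hbase : 0 < 1 / x - 1 := by
    have : 1 < 1 / x := (one_lt_one_div hx0 hx1)
    linarith
  set r : ℝ := (1 / x - 1) ^ (1 / q) with hrdef
  have hr : 0 < r := Real.rpow_pos_of_pos hbase _
  clear_value r
  set z : ℂ := 1 - Complex.exp (Real.pi / q * I) * (r : ℂ) with hzdef
  clear_value z
  have hcast : ((Real.pi : ℂ) / (q : ℂ) * I) = ((Real.pi / q : ℝ) : ℂ) * I := by
    push_cast; ring
  have hexp_re : (Complex.exp ((Real.pi : ℂ) / (q : ℂ) * I)).re = Real.cos (Real.pi / q) := by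
    rw [hcast, Complex.exp_ofReal_mul_I_re]
  have hexp_im : (Complex.exp ((Real.pi : ℂ) / (q : ℂ) * I)).im = Real.sin (Real.pi / q) := by
    rw [hcast, Complex.exp_ofReal_mul_I_im]
  have hre : z.re = 1 - Real.cos (Real.pi / q) * r := by
    rw [hzdef]
    simp [Complex.sub_re, Complex.mul_re, hexp_re, hexp_im]
  have him : z.im = -(Real.sin (Real.pi / q) * r) := by
    rw [hzdef]
    simp [Complex.sub_im, Complex.mul_im, hexp_re, hexp_im]
  have hsinθ : 0 < Real.sin (Real.pi / q) :=
    Real.sin_pos_of_pos_of_lt_pi hθpos hθlt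
  have himneg : z.im < 0 := by rw [him]; nlinarith
  have hz0 : z ≠ 0 := by
    intro h; rw [h] at himneg; simp at himneg
  have habs : 0 < ‖z‖ := by
    exact norm_pos_iff.mpr hz0
  set a : ℝ := Complex.arg z with hadef
  clear_value a
  have ha0 : a < 0 := hadef ▸ Complex.arg_neg_iff.2 himneg
  have haπ : -Real.pi < a := hadef ▸ Complex.neg_pi_lt_arg z
  have hre' : z.re = ‖z‖ * Real.cos a := by
    rw [hadef, Complex.cos_arg hz0]
    field_simp
  have him' : z.im = ‖z‖ * Real.sin a := by
    rw [hadef, Complex.sin_arg]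
    field_simp
  have key : ‖z‖ * Real.sin (a + Real.pi / p) = Real.sin (Real.pi / p) := by
    have h1 : Real.sin (Real.pi / q + Real.pi / p) = 0 := by
      rw [hsum]; exact Real.sin_pi
    rw [Real.sin_add] at h1 ⊢
    have e1 : ‖z‖ * (Real.sin a * Real.cos (Real.pi / p)
        + Real.cos a * Real.sin (Real.pi / p))
        = z.im * Real.cos (Real.pi / p) + z.re * Real.sin (Real.pi / p) := by
      rw [hre', him']; ring
    rw [e1, hre, him]
    nlinarith [h1]
  have hsinφ : 0 < Real.sin (Real.pi / p) :=
    Real.sin_pos_of_pos_of_lt_pi hφpos hφlt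
  have hsin_sum_pos : 0 < Real.sin (a + Real.pi / p) := by
    nlinarith [key]
  have hlow : -(Real.pi / p) < a := by
    by_contra h
    push_neg at h
    have h1 : a + Real.pi / p ≤ 0 := by linarith
    have h2 : -Real.pi ≤ a + Real.pi / p := by linarith
    have := Real.sin_nonpos_of_nonpos_of_neg_pi_le h1 h2
    linarith
  -- hence (p-1) * a ∈ (-π, 0)
  have hprod_neg : a * (p - 1) < 0 := mul_neg_of_neg_of_pos ha0 hp1
  have hprod_gt : -Real.pi < a * (p - 1) := by
    have h1 : -(Real.pi / p) * (p - 1) < a * (p - 1) := by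
      exact mul_lt_mul_of_pos_right hlow hp1
    have hp0 : (0:ℝ) < p := by linarith
    have h2 : (Real.pi / p) * (p - 1) < Real.pi := by
      rw [div_mul_eq_mul_div, div_lt_iff₀ hp0]
      exact (mul_lt_mul_iff_right₀ hπ).2 (by linarith)
    linarith
  have hsin_neg : Real.sin (a * (p - 1)) < 0 := by
    have : 0 < Real.sin (-(a * (p - 1))) :=
      Real.sin_pos_of_pos_of_lt_pi (by linarith) (by linarith)
    rw [Real.sin_neg] at this; linarith
  have himcpow : (z ^ ((p - 1 : ℝ) : ℂ)).im
      = Real.exp (Real.log (‖z‖) * (p - 1)) * Real.sin (a * (p - 1)) := by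
    rw [Complex.cpow_def_of_ne_zero hz0, Complex.exp_im]
    simp [Complex.mul_re, Complex.mul_im, Complex.log_re, Complex.log_im, ← hadef]
  have himlt : (z ^ ((p - 1 : ℝ) : ℂ)).im < 0 := by
    rw [himcpow]
    exact mul_neg_of_pos_of_neg (Real.exp_pos _) hsin_neg
  have hxp : 0 < x ^ (p - 1) := Real.rpow_pos_of_pos hx0 _
  have heq : -(1 / Real.pi) * x ^ (p - 1) * (z ^ ((p - 1 : ℝ) : ℂ)).im
      = (1 / Real.pi) * (x ^ (p - 1) * (-(z ^ ((p - 1 : ℝ) : ℂ)).im)) := by ring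
  have hz_eq : (1 - Complex.exp (Real.pi / q * I) * ((1 / x - 1) ^ (1 / q) : ℝ) : ℂ) = z := by
    rw [hzdef, hrdef]
  rw [heq]
  exact mul_pos (by positivity) (mul_pos hxp (by linarith))
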